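/- Let J be a finite set of positive integers with 1 ∉ J. Then Σ_{I ⊆ J} (-1)^{|I|} / lcm(I) > 0, where lcm(∅) = 1. -/

import Mathlib

open Finset

theorem alternating_lcm_sum_pos (J : Finset ℕ) (hpos : ∀ j ∈ J, 0 < j) (h1 : 1 ∉ J) :
    0 < ∑ I ∈ J.powerset, ((-1 : ℚ) ^ I.card / ((I.lcm id : ℕ) : ℚ)) := by
  set L := J.lcm id with hLdef
  have hlcm_pos : ∀ t : Finset ℕ, t ⊆ J → 0 < t.lcm id := by
    intro t ht
    rw [Nat.pos_iff_ne_zero]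
    intro h
    rw [Finset.lcm_eq_zero_iff] at h
    obtain ⟨j, hj, hj0⟩ := h
    exact absurd (hpos j (ht hj)) (by simp [hj0] at *; omega)
  have hL0 : 0 < L := hlcm_pos J (subset_refl J)
  have hdvdL : ∀ t : Finset ℕ, t ⊆ J → t.lcm id ∣ L :=
    fun t ht => Finset.lcm_dvd fun j hj => Finset.dvd_lcm (ht hj)
  -- indicator product
  have hind : ∀ (t : Finset ℕ) (n : ℕ),
      (∏ j ∈ t, (if j ∣ n then (1:ℚ) else 0)) = if t.lcm id ∣ n then 1 else 0 := by
    intro t n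
    by_cases h : t.lcm id ∣ n
    · rw [if_pos h, Finset.prod_eq_one]
      intro j hj
      exact if_pos ((Finset.dvd_lcm hj).trans h)
    · rw [if_neg h]
      obtain ⟨j, hj, hjn⟩ : ∃ j ∈ t, ¬ j ∣ n := by
        by_contra hc
        push_neg at hc
        exact h (Finset.lcm_dvd fun j hj => hc j hj)
      exact Finset.prod_eq_zero hj (if_neg hjn)
  have key : (L : ℚ) * ∑ I ∈ J.powerset, ((-1:ℚ)^I.card / ((I.lcm id : ℕ):ℚ))
      = ∑ n ∈ Icc 1 L, ∏ j ∈ J, (if j ∣ n then (0:ℚ) else 1) := by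
    have hprod : ∀ n : ℕ, (∏ j ∈ J, (if j ∣ n then (0:ℚ) else 1))
        = ∑ t ∈ J.powerset, (-1:ℚ)^t.card * (if t.lcm id ∣ n then 1 else 0) := by
      intro n
      have : (∏ j ∈ J, (if j ∣ n then (0:ℚ) else 1))
          = ∏ j ∈ J, ((-(if j ∣ n then (1:ℚ) else 0)) + 1) := by
        apply Finset.prod_congr rfl
        intro j _
        split_ifs <;> ring
      rw [this, Finset.prod_add]
      apply Finset.sum_congr rfl
      intro t ht
      rw [Finset.prod_const_one, mul_one,
        show (∏ i ∈ t, -if i ∣ n then (1:ℚ) else 0)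
          = ∏ i ∈ t, (-1) * (if i ∣ n then (1:ℚ) else 0) by
            exact Finset.prod_congr rfl fun i _ => by ring,
        Finset.prod_mul_distrib, Finset.prod_const, hind]
    rw [Finset.sum_congr rfl fun n _ => hprod n, Finset.sum_comm, Finset.mul_sum]
    apply Finset.sum_congr rfl
    intro t ht
    rw [Finset.mem_powerset] at ht
    have h1 : ∑ n ∈ Icc 1 L, ((-1:ℚ)^t.card * (if t.lcm id ∣ n then 1 else 0))
        = (-1:ℚ)^t.card * ∑ n ∈ Icc 1 L, (if t.lcm id ∣ n then (1:ℚ) else 0) := by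
      rw [Finset.mul_sum]
    rw [h1, Finset.sum_boole]
    have hIcc : Icc 1 L = Ioc 0 L := rfl
    have hcard : ((Icc 1 L).filter (fun n => t.lcm id ∣ n)).card = L / t.lcm id := by
      rw [hIcc]
      exact Nat.Ioc_filter_dvd_card_eq_div L (t.lcm id)
    rw [hcard]
    have hd := hdvdL t ht
    have hne : ((t.lcm id : ℕ) : ℚ) ≠ 0 := by
      exact_mod_cast (hlcm_pos t ht).ne'
    rw [Nat.cast_div hd hne]
    ring
  have hpos1 : 0 < ∑ n ∈ Icc 1 L, ∏ j ∈ J, (if j ∣ n then (0:ℚ) else 1) := by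
    apply Finset.sum_pos'
    · intro n _
      apply Finset.prod_nonneg
      intro j _
      split_ifs <;> norm_num
    · refine ⟨1, Finset.mem_Icc.mpr ⟨le_refl 1, hL0⟩, ?_⟩
      rw [Finset.prod_eq_one]
      · norm_num
      intro j hj
      rw [if_neg]
      intro hdvd
      exact h1 (Nat.dvd_one.mp hdvd ▸ hj)
  have := key ▸ hpos1
  by_contra hc
  push_neg at hc
  nlinarith [this, (show (0:ℚ) < (L:ℚ) by exact_mod_cast hL0)]
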